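/- arXiv:1902.03073 — 6 statements merged into one kernel-verified Lean document; each statement's English description precedes it below -/
import Mathlib

section
/- If a sequence of nonnegative reals satisfies e_{k+1} ≤ A₂·e_k² + A₁·e_k + A₀ with A₂ > 0, A₁ ∈ [0,1), and there exists τ ∈ (A₁, 1) with e_0 ≤ (τ − A₁)/A₂ and A₀ ≤ (1 − τ)(τ − A₁)/A₂, then e_k ≤ (τ − A₁)/A₂ for all k and limsup_{k→∞} e_k ≤ A₀/(1 − τ). -/
/-- Quadratic recursion bound: if `e (k+1) ≤ A₂ e k ^ 2 + A₁ e k + A₀` with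
`A₂ > 0`, `A₁ ∈ [0,1)`, `A₀ ≥ 0`, and `τ ∈ (A₁, 1)` with `e 0 ≤ (τ - A₁)/A₂`
and `A₀ ≤ (1 - τ)(τ - A₁)/A₂`, then `e k ≤ (τ - A₁)/A₂` for all `k` and
`limsup e ≤ A₀ / (1 - τ)`. -/
theorem stmt_1 (e : ℕ → ℝ) (A₂ A₁ A₀ τ : ℝ)
    (hA2 : 0 < A₂) (hA1l : 0 ≤ A₁) (hA1u : A₁ < 1) (hA0 : 0 ≤ A₀)
    (hτl : A₁ < τ) (hτu : τ < 1)
    (he : ∀ k, 0 ≤ e k)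
    (hrec : ∀ k, e (k + 1) ≤ A₂ * (e k) ^ 2 + A₁ * e k + A₀)
    (h0 : e 0 ≤ (τ - A₁) / A₂)
    (hA0small : A₀ ≤ (1 - τ) * (τ - A₁) / A₂) :
    (∀ k, e k ≤ (τ - A₁) / A₂) ∧
      Filter.limsup e Filter.atTop ≤ A₀ / (1 - τ) := by
  set R := (τ - A₁) / A₂ with hR
  have hτ0 : 0 ≤ τ := le_of_lt (lt_of_le_of_lt hA1l hτl)
  have hRnn : 0 ≤ R := div_nonneg (by linarith) hA2.le
  -- invariance
  have hinv : ∀ k, e k ≤ R := by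
    intro k
    induction k with
    | zero => exact h0
    | succ n ih =>
      have h1 : A₂ * (e n) ^ 2 ≤ (τ - A₁) * e n := by
        have := mul_le_mul_of_nonneg_left ih (mul_nonneg hA2.le (he n))
        calc A₂ * (e n) ^ 2 = A₂ * e n * e n := by ring
          _ ≤ A₂ * e n * R := by
            exact mul_le_mul_of_nonneg_left ih (mul_nonneg hA2.le (he n))
          _ = (τ - A₁) * e n := by
            rw [hR]; field_simp
      have h2 : e (n + 1) ≤ τ * e n + A₀ := by
        have := hrec n; nlinarith
      have h3 : τ * e n ≤ τ * R := mul_le_mul_of_nonneg_left ih hτ0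
      have h4 : A₀ ≤ (1 - τ) * R := by
        rw [hR, ← mul_div_assoc]; exact hA0small
      linarith
  -- linear recursion bound
  have hlin : ∀ k, e (k + 1) ≤ τ * e k + A₀ := by
    intro k
    have h1 : A₂ * (e k) ^ 2 ≤ (τ - A₁) * e k := by
      calc A₂ * (e k) ^ 2 = A₂ * e k * e k := by ring
        _ ≤ A₂ * e k * R := mul_le_mul_of_nonneg_left (hinv k) (mul_nonneg hA2.le (he k))
        _ = (τ - A₁) * e k := by rw [hR]; field_simp
    have := hrec k; nlinarith
  set L := A₀ / (1 - τ) with hL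
  have h1τ : (1 : ℝ) - τ ≠ 0 := by linarith
  have hLτ : τ * L + A₀ = L := by
    rw [hL]; field_simp; ring
  have hLnn : 0 ≤ L := div_nonneg hA0 (by linarith)
  -- geometric bound
  have hgeo : ∀ k, e k ≤ τ ^ k * e 0 + L := by
    intro k
    induction k with
    | zero => simp; linarith
    | succ n ih =>
      calc e (n + 1) ≤ τ * e n + A₀ := hlin n
        _ ≤ τ * (τ ^ n * e 0 + L) + A₀ := by
            have := mul_le_mul_of_nonneg_left ih hτ0; linarith
        _ = τ ^ (n + 1) * e 0 + (τ * L + A₀) := by ring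
        _ = τ ^ (n + 1) * e 0 + L := by rw [hLτ]
  refine ⟨hinv, ?_⟩
  have htend : Filter.Tendsto (fun k => τ ^ k * e 0 + L) Filter.atTop (nhds L) := by
    have h1 : Filter.Tendsto (fun k : ℕ => τ ^ k) Filter.atTop (nhds 0) :=
      tendsto_pow_atTop_nhds_zero_of_lt_one hτ0 hτu
    have := (h1.mul_const (e 0)).add_const L
    simpa using this
  have hls : Filter.limsup (fun k => τ ^ k * e 0 + L) Filter.atTop = L :=
    htend.limsup_eq
  calc Filter.limsup e Filter.atTop
      ≤ Filter.limsup (fun k => τ ^ k * e 0 + L) Filter.atTop := by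
        have hb1 : Filter.IsBoundedUnder (· ≥ ·) Filter.atTop e :=
          Filter.isBoundedUnder_of ⟨0, fun k => he k⟩
        have hb2 : Filter.IsBoundedUnder (· ≤ ·) Filter.atTop
            (fun k => τ ^ k * e 0 + L) :=
          Filter.isBoundedUnder_of ⟨e 0 + L, fun k => by
            nlinarith [pow_le_one₀ hτ0 hτu.le (n := k), he 0, pow_nonneg hτ0 k]⟩
        exact Filter.limsup_le_limsup (Filter.Eventually.of_forall hgeo)
          hb1.isCoboundedUnder_le hb2
    _ = L := hls
end

section
/- Let S be a symmetric matrix with ‖S‖ ≤ 1 − γm and smallest singular value at least 1 − γL > 0, and let P be a symmetric positive semidefinite matrix with ‖P‖ ≤ 1 such that PS is symmetric positive semidefinite. Then the smallest eigenvalue of I − PS is at least γm, and hence the smallest singular value of γ^{-1}·S·(I − PS) is at least m(1 − γL); in particular ‖(γ^{-1}·S·(I − PS))^{-1}‖ ≤ 1/(m(1 − γL)) whenever the matrix is invertible. -/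
/-- Let `S` be symmetric with `‖S‖ ≤ 1 - γm` and smallest singular value at
least `1 - γL > 0`, and `P` symmetric positive semidefinite with `‖P‖ ≤ 1`
such that `P S` is symmetric positive semidefinite. Then the smallest
eigenvalue of `I - P S` is at least `γ m`, the smallest singular value of
`γ⁻¹ S (I - P S)` is at least `m (1 - γL)`, and its inverse (whenever it
exists) has operator norm at most `1 / (m (1 - γL))`. -/
theorem stmt_3 {n : ℕ}
    (S P : EuclideanSpace ℝ (Fin n) →L[ℝ] EuclideanSpace ℝ (Fin n))
    (m L γ : ℝ) (hm : 0 < m) (hmL : m ≤ L) (hγ0 : 0 < γ) (hγL : γ < 1 / L)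
    (hS : IsSelfAdjoint S) (hP : IsSelfAdjoint P)
    (hPpsd : ∀ x, 0 ≤ (inner ℝ x (P x) : ℝ))
    (hPnorm : ‖P‖ ≤ 1)
    (hPS : IsSelfAdjoint (P ∘L S))
    (hPSpsd : ∀ x, 0 ≤ (inner ℝ x ((P ∘L S) x) : ℝ))
    (hSnorm : ‖S‖ ≤ 1 - γ * m)
    (hSmin : ∀ x, (1 - γ * L) * ‖x‖ ≤ ‖S x‖) :
    (∀ x, γ * m * ‖x‖ ^ 2 ≤ (inner ℝ x ((1 - P ∘L S) x) : ℝ)) ∧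
      (∀ x, m * (1 - γ * L) * ‖x‖ ≤ ‖(γ⁻¹ • (S ∘L (1 - P ∘L S))) x‖) ∧
      (∀ T : EuclideanSpace ℝ (Fin n) →L[ℝ] EuclideanSpace ℝ (Fin n),
        T ∘L (γ⁻¹ • (S ∘L (1 - P ∘L S))) = 1 →
        (γ⁻¹ • (S ∘L (1 - P ∘L S))) ∘L T = 1 →
        ‖T‖ ≤ 1 / (m * (1 - γ * L))) := by
  have hL : 0 < L := lt_of_lt_of_le hm hmL
  have hγL' : 0 < 1 - γ * L := by
    have : γ * L < (1 / L) * L := by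
      exact mul_lt_mul_of_pos_right hγL hL
    rw [one_div_mul_cancel hL.ne'] at this
    linarith
  have hPSnorm : ‖P ∘L S‖ ≤ 1 - γ * m := by
    calc ‖P ∘L S‖ ≤ ‖P‖ * ‖S‖ := ContinuousLinearMap.opNorm_comp_le _ _
      _ ≤ 1 * (1 - γ * m) := by
          apply mul_le_mul hPnorm hSnorm (norm_nonneg _) zero_le_one
      _ = 1 - γ * m := one_mul _
  have part1 : ∀ x : EuclideanSpace ℝ (Fin n),
      γ * m * ‖x‖ ^ 2 ≤ (inner ℝ x ((1 - P ∘L S) x) : ℝ) := by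
    intro x
    have h1 : (inner ℝ x ((P ∘L S) x) : ℝ) ≤ (1 - γ * m) * ‖x‖ ^ 2 := by
      calc (inner ℝ x ((P ∘L S) x) : ℝ) ≤ ‖x‖ * ‖(P ∘L S) x‖ := real_inner_le_norm _ _
        _ ≤ ‖x‖ * ((1 - γ * m) * ‖x‖) := by
            apply mul_le_mul_of_nonneg_left _ (norm_nonneg x)
            exact le_trans (ContinuousLinearMap.le_opNorm _ _)
              (mul_le_mul_of_nonneg_right hPSnorm (norm_nonneg x))
        _ = (1 - γ * m) * ‖x‖ ^ 2 := by ring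
    have h2 : (inner ℝ x ((1 - P ∘L S) x) : ℝ)
        = ‖x‖ ^ 2 - (inner ℝ x ((P ∘L S) x) : ℝ) := by
      rw [ContinuousLinearMap.sub_apply, inner_sub_right,
        ContinuousLinearMap.one_apply, real_inner_self_eq_norm_sq]
    rw [h2]; linarith
  have part2 : ∀ x : EuclideanSpace ℝ (Fin n),
      m * (1 - γ * L) * ‖x‖ ≤ ‖(γ⁻¹ • (S ∘L (1 - P ∘L S))) x‖ := by
    intro x
    have hIx : γ * m * ‖x‖ ≤ ‖(1 - P ∘L S) x‖ := by
      rcases eq_or_ne x 0 with rfl | hx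
      · simp
      · have hxpos : 0 < ‖x‖ := norm_pos_iff.mpr hx
        have := part1 x
        have hcs : (inner ℝ x ((1 - P ∘L S) x) : ℝ) ≤ ‖x‖ * ‖(1 - P ∘L S) x‖ :=
          real_inner_le_norm _ _
        have : γ * m * ‖x‖ ^ 2 ≤ ‖x‖ * ‖(1 - P ∘L S) x‖ := le_trans this hcs
        nlinarith
    have hSstep : (1 - γ * L) * ‖(1 - P ∘L S) x‖ ≤ ‖S ((1 - P ∘L S) x)‖ :=
      hSmin _
    have key : (1 - γ * L) * (γ * m * ‖x‖) ≤ ‖S ((1 - P ∘L S) x)‖ :=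
      le_trans (by nlinarith) hSstep
    have happ : ‖(γ⁻¹ • (S ∘L (1 - P ∘L S))) x‖ = γ⁻¹ * ‖S ((1 - P ∘L S) x)‖ := by
      simp [ContinuousLinearMap.smul_apply, norm_smul, abs_of_pos hγ0,
        Real.norm_eq_abs]
    rw [happ]
    have : γ⁻¹ * ((1 - γ * L) * (γ * m * ‖x‖)) ≤ γ⁻¹ * ‖S ((1 - P ∘L S) x)‖ :=
      mul_le_mul_of_nonneg_left key (inv_nonneg.mpr hγ0.le)
    calc m * (1 - γ * L) * ‖x‖ = γ⁻¹ * ((1 - γ * L) * (γ * m * ‖x‖)) := by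
          field_simp
      _ ≤ γ⁻¹ * ‖S ((1 - P ∘L S) x)‖ := this
  refine ⟨part1, part2, ?_⟩
  intro T hT1 hT2
  have hpos : 0 < m * (1 - γ * L) := mul_pos hm hγL'
  apply ContinuousLinearMap.opNorm_le_bound _ (by positivity)
  intro y
  have := part2 (T y)
  have hAT : (γ⁻¹ • (S ∘L (1 - P ∘L S))) (T y) = y := by
    have := congrArg (fun f => f y) hT2
    simpa using this
  rw [hAT] at this
  rw [div_mul_eq_mul_div, le_div_iff₀ hpos]
  linarith
end

section
/- With h_k the quadratic Taylor prediction model of f at (x_k, t_k), and assuming the third-order bounds ‖∇_{xxx}f‖ ≤ C₁, ‖∇_{xtx}f‖ ≤ C₂ (and ‖∇_{txx}f‖ ≤ C₂), ‖∇_{ttx}f‖ ≤ C₃ hold everywhere, the Taylor residual satisfies ‖∇_x f(x; t_k + T_s) − ∇h_k(x)‖ ≤ (C₁/2)‖x − x_k‖² + T_s C₂ ‖x − x_k‖ + (T_s²/2) C₃ for all x. -/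
open Set

/-- If `‖f' t‖ ≤ C (t - a)` on `[a,b]`, then `‖f b - f a‖ ≤ (C/2)(b-a)²`. -/
lemma quad_aux {E : Type*} [NormedAddCommGroup E] [NormedSpace ℝ E]
    {f f' : ℝ → E} {a b C : ℝ} (hab : a ≤ b)
    (hd : ∀ t, HasDerivAt f (f' t) t)
    (hb : ∀ t ∈ Icc a b, ‖f' t‖ ≤ C * (t - a)) :
    ‖f b - f a‖ ≤ C / 2 * (b - a) ^ 2 := by
  have hcont : ContinuousOn (fun t => f t - f a) (Icc a b) := fun t _ =>
    ((hd t).continuousAt.sub continuousAt_const).continuousWithinAt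
  have hB : ∀ x, HasDerivAt (fun t => C / 2 * (t - a) ^ 2) (C * (x - a)) x := by
    intro x
    have h1 : HasDerivAt (fun t : ℝ => (t - a) ^ 2) (2 * (x - a)) x := by
      have := ((hasDerivAt_id x).sub_const a).pow 2
      exact this.congr_deriv (by simp)
    have := h1.const_mul (C / 2)
    exact this.congr_deriv (by ring)
  have key := image_norm_le_of_norm_deriv_right_le_deriv_boundary
    (f := fun t => f t - f a) (a := a) (b := b) (f' := f') hcont
    (fun x _ => ((hd x).sub_const (f a)).hasDerivWithinAt.mono (fun y hy => trivial))
    (B := fun t => C / 2 * (t - a) ^ 2) (B' := fun t => C * (t - a))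
    (by simp) hB (fun x hx => hb x ⟨hx.1, hx.2.le⟩)
  simpa using key (right_mem_Icc.2 hab)

/-- Second-order Taylor residual bound for the prediction model. Writing
`G(t,x) = ∇_x f(x;t)`, `Gx = ∇_{xx} f`, `Gt = ∇_{tx} f`, with the third-order
bounds `‖∇_{xxx} f‖ ≤ C₁`, `‖∇_{xtx} f‖ ≤ C₂`, `‖∇_{txx} f‖ ≤ C₂`,
`‖∇_{ttx} f‖ ≤ C₃` (expressed as Lipschitz bounds on `Gx`, `Gt`), the Taylor
residual of the prediction gradient satisfies, for all `x`,
`‖G(t_k+T_s, x) - (G(t_k,x_k) + Gx(t_k,x_k)(x-x_k) + T_s Gt(t_k,x_k))‖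
  ≤ (C₁/2)‖x-x_k‖² + T_s C₂ ‖x-x_k‖ + (T_s²/2) C₃`. -/
theorem stmt_9 {n : ℕ}
    (G Gt : ℝ → EuclideanSpace ℝ (Fin n) → EuclideanSpace ℝ (Fin n))
    (Gx : ℝ → EuclideanSpace ℝ (Fin n) →
      (EuclideanSpace ℝ (Fin n) →L[ℝ] EuclideanSpace ℝ (Fin n)))
    (C₁ C₂ C₃ Ts tk : ℝ) (hC₁ : 0 ≤ C₁) (hC₂ : 0 ≤ C₂) (hC₃ : 0 ≤ C₃) (hTs : 0 < Ts)
    (xk : EuclideanSpace ℝ (Fin n))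
    (hGx : ∀ t x, HasFDerivAt (G t) (Gx t x) x)
    (hGt : ∀ t x, HasDerivAt (fun s => G s x) (Gt t x) t)
    (hxxx : ∀ t x y, ‖Gx t x - Gx t y‖ ≤ C₁ * ‖x - y‖)
    (hxtx : ∀ x t s, ‖Gx t x - Gx s x‖ ≤ C₂ * |t - s|)
    (htxx : ∀ t x y, ‖Gt t x - Gt t y‖ ≤ C₂ * ‖x - y‖)
    (httx : ∀ x t s, ‖Gt t x - Gt s x‖ ≤ C₃ * |t - s|) :
    ∀ x, ‖G (tk + Ts) x - (G tk xk + Gx tk xk (x - xk) + Ts • Gt tk xk)‖ ≤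
      C₁ / 2 * ‖x - xk‖ ^ 2 + Ts * C₂ * ‖x - xk‖ + Ts ^ 2 / 2 * C₃ := by
  intro x
  set v := x - xk with hv
  -- Term 3 : spatial second-order Taylor bound
  have h3 : ‖G tk x - G tk xk - Gx tk xk v‖ ≤ C₁ / 2 * ‖v‖ ^ 2 := by
    have hd : ∀ τ : ℝ, HasDerivAt (fun τ => G tk (xk + τ • v) - τ • (Gx tk xk v))
        ((Gx tk (xk + τ • v) - Gx tk xk) v) τ := by
      intro τ
      have hpath : HasDerivAt (fun τ : ℝ => xk + τ • v) v τ := by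
        simpa using ((hasDerivAt_id τ).smul_const v).const_add xk
      have h1 := (hGx tk (xk + τ • v)).comp_hasDerivAt τ hpath
      have h2 : HasDerivAt (fun τ : ℝ => τ • (Gx tk xk v)) (Gx tk xk v) τ := by
        simpa using (hasDerivAt_id τ).smul_const (Gx tk xk v)
      exact (h1.sub h2).congr_deriv (by simp)
    have hbnd : ∀ τ ∈ Icc (0:ℝ) 1,
        ‖(Gx tk (xk + τ • v) - Gx tk xk) v‖ ≤ (C₁ * ‖v‖ ^ 2) * (τ - 0) := by
      intro τ hτ
      calc ‖(Gx tk (xk + τ • v) - Gx tk xk) v‖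
          ≤ ‖Gx tk (xk + τ • v) - Gx tk xk‖ * ‖v‖ :=
            (Gx tk (xk + τ • v) - Gx tk xk).le_opNorm v
        _ ≤ (C₁ * ‖xk + τ • v - xk‖) * ‖v‖ := by
            gcongr; exact hxxx tk _ _
        _ = (C₁ * (|τ| * ‖v‖)) * ‖v‖ := by rw [add_sub_cancel_left, norm_smul, Real.norm_eq_abs]
        _ = (C₁ * ‖v‖ ^ 2) * (|τ|) := by ring
        _ ≤ (C₁ * ‖v‖ ^ 2) * (τ - 0) := by
            rw [abs_of_nonneg hτ.1, sub_zero]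
    have key := quad_aux (zero_le_one) hd hbnd
    have hxv : xk + (1:ℝ) • v = x := by rw [one_smul, hv]; abel
    rw [hxv, zero_smul, zero_smul, add_zero, sub_zero, one_smul, sub_right_comm] at key
    calc ‖G tk x - G tk xk - Gx tk xk v‖
        ≤ (C₁ * ‖v‖ ^ 2) / 2 * (1 - 0) ^ 2 := key
      _ = C₁ / 2 * ‖v‖ ^ 2 := by ring
  -- Term 1 : temporal second-order Taylor bound
  have h1 : ‖G (tk + Ts) x - G tk x - Ts • Gt tk x‖ ≤ C₃ / 2 * Ts ^ 2 := by
    have hd : ∀ s : ℝ, HasDerivAt (fun s => G (tk + s) x - s • Gt tk x)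
        (Gt (tk + s) x - Gt tk x) s := by
      intro s
      have hshift : HasDerivAt (fun s : ℝ => tk + s) 1 s := by
        simpa using (hasDerivAt_id s).const_add tk
      have h1 : HasDerivAt (fun s : ℝ => G (tk + s) x) (Gt (tk + s) x) s := by
        have := HasDerivAt.scomp s (hGt (tk + s) x) hshift
        exact this.congr_deriv (by simp)
      have h2 : HasDerivAt (fun s : ℝ => s • Gt tk x) (Gt tk x) s := by
        simpa using (hasDerivAt_id s).smul_const (Gt tk x)
      exact h1.sub h2
    have hbnd : ∀ s ∈ Icc (0:ℝ) Ts,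
        ‖Gt (tk + s) x - Gt tk x‖ ≤ C₃ * (s - 0) := by
      intro s hs
      have := httx x (tk + s) tk
      simpa [abs_of_nonneg hs.1] using this
    have key := quad_aux hTs.le hd hbnd
    rw [zero_smul, sub_zero, add_zero, sub_right_comm] at key
    calc ‖G (tk + Ts) x - G tk x - Ts • Gt tk x‖ ≤ C₃ / 2 * (Ts - 0) ^ 2 := key
      _ = C₃ / 2 * Ts ^ 2 := by ring
  -- Term 2
  have h2 : ‖Ts • (Gt tk x - Gt tk xk)‖ ≤ Ts * C₂ * ‖v‖ := by
    rw [norm_smul, Real.norm_eq_abs, abs_of_pos hTs]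
    calc Ts * ‖Gt tk x - Gt tk xk‖ ≤ Ts * (C₂ * ‖x - xk‖) := by
          gcongr; exact htxx tk x xk
      _ = Ts * C₂ * ‖v‖ := by rw [hv]; ring
  -- Combine
  have hdecomp : G (tk + Ts) x - (G tk xk + Gx tk xk v + Ts • Gt tk xk) =
      (G (tk + Ts) x - G tk x - Ts • Gt tk x) + Ts • (Gt tk x - Gt tk xk) +
      (G tk x - G tk xk - Gx tk xk v) := by
    rw [smul_sub]; abel
  calc ‖G (tk + Ts) x - (G tk xk + Gx tk xk v + Ts • Gt tk xk)‖
      ≤ ‖G (tk + Ts) x - G tk x - Ts • Gt tk x‖ + ‖Ts • (Gt tk x - Gt tk xk)‖ +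
        ‖G tk x - G tk xk - Gx tk xk v‖ := by rw [hdecomp]; exact norm_add₃_le
    _ ≤ C₃ / 2 * Ts ^ 2 + Ts * C₂ * ‖v‖ + C₁ / 2 * ‖v‖ ^ 2 := by
        gcongr
    _ = C₁ / 2 * ‖v‖ ^ 2 + Ts * C₂ * ‖v‖ + Ts ^ 2 / 2 * C₃ := by ring
end

section
/- Let f(·;t) be m-strongly convex and L-smooth in x uniformly in t, with ‖∇_{tx}f(x;t)‖ ≤ C₀, and g proper closed convex. Then the solution map t ↦ x*(t) = argmin_x { f(x;t) + g(x) } is Lipschitz continuous with constant at most C₀/m: ‖x*(t) − x*(s)‖ ≤ (C₀/m)|t − s|. -/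
open Set Filter Topology

/-- Quadratic growth at a minimizer of a strongly convex plus convex function. -/
lemma min_strong_growth {E : Type*} [NormedAddCommGroup E] [NormedSpace ℝ E]
    (F G : E → ℝ) (m : ℝ) (hF : StrongConvexOn Set.univ m F)
    (hG : ConvexOn ℝ Set.univ G) {x : E}
    (hx : IsMinOn (fun z => F z + G z) Set.univ x) (y : E) :
    m / 2 * ‖y - x‖ ^ 2 ≤ (F y + G y) - (F x + G x) := by
  set c : ℝ := m / 2 * ‖y - x‖ ^ 2 with hc
  have key : ∀ τ : ℝ, τ ∈ Set.Ioo (0:ℝ) 1 → (1 - τ) * c ≤ (F y + G y) - (F x + G x) := by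
    intro τ hτ
    have ha : (0:ℝ) ≤ 1 - τ := by linarith [hτ.2]
    have hb : (0:ℝ) ≤ τ := le_of_lt hτ.1
    have hab : (1 - τ) + τ = 1 := by ring
    have hFi := hF.2 (Set.mem_univ x) (Set.mem_univ y) ha hb hab
    have hGi := hG.2 (Set.mem_univ x) (Set.mem_univ y) ha hb hab
    have hmin := hx (Set.mem_univ ((1 - τ) • x + τ • y))
    simp only [smul_eq_mul] at hFi hGi hmin
    have hnorm : ‖x - y‖ = ‖y - x‖ := norm_sub_rev x y
    rw [hnorm] at hFi
    have : F x + G x ≤ (1 - τ) * (F x + G x) + τ * (F y + G y) - (1 - τ) * τ * c := by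
      calc F x + G x ≤ F ((1 - τ) • x + τ • y) + G ((1 - τ) • x + τ • y) := hmin
        _ ≤ ((1 - τ) * F x + τ * F y - (1 - τ) * τ * (m / 2 * ‖y - x‖ ^ 2))
            + ((1 - τ) * G x + τ * G y) := add_le_add hFi hGi
        _ = (1 - τ) * (F x + G x) + τ * (F y + F y) - (1 - τ) * τ * c
            + τ * (G y - F y) := by rw [hc]; ring
        _ = (1 - τ) * (F x + G x) + τ * (F y + G y) - (1 - τ) * τ * c := by ring
    have hτpos := hτ.1
    nlinarith [this]
  have htend : Tendsto (fun τ : ℝ => (1 - τ) * c) (𝓝[>] (0:ℝ)) (𝓝 c) := by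
    have : Tendsto (fun τ : ℝ => (1 - τ) * c) (𝓝 (0:ℝ)) (𝓝 ((1 - 0) * c)) := by
      exact ((continuous_const.sub continuous_id).mul continuous_const).tendsto 0
    simpa using this.mono_left nhdsWithin_le_nhds
  refine le_of_tendsto htend ?_
  filter_upwards [Ioo_mem_nhdsGT_of_mem (Set.mem_Ico.2 ⟨le_refl (0:ℝ), zero_lt_one⟩)] with τ hτ
  exact key τ hτ

/-- With `f(·;t)` `m`-strongly convex and `L`-smooth uniformly in `t`,
`‖∇_{tx} f‖ ≤ C₀`, and `g` proper closed convex, the solution map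
`t ↦ x*(t) = argmin (f(·;t) + g)` is `(C₀/m)`-Lipschitz. -/
theorem stmt_10 {n : ℕ} (f : ℝ → EuclideanSpace ℝ (Fin n) → ℝ)
    (gx : ℝ → EuclideanSpace ℝ (Fin n) → EuclideanSpace ℝ (Fin n))
    (g : EuclideanSpace ℝ (Fin n) → ℝ)
    (m L C₀ : ℝ) (hm : 0 < m) (hmL : m ≤ L) (hC₀ : 0 ≤ C₀)
    (hsc : ∀ t, StrongConvexOn Set.univ m (f t))
    (hgrad : ∀ t x, HasGradientAt (f t) (gx t x) x)
    (hLsmooth : ∀ t x y, ‖gx t x - gx t y‖ ≤ L * ‖x - y‖)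
    (htLip : ∀ x t s, ‖gx t x - gx s x‖ ≤ C₀ * |t - s|)
    (hgconv : ConvexOn ℝ Set.univ g) (hglsc : LowerSemicontinuous g)
    (xstar : ℝ → EuclideanSpace ℝ (Fin n))
    (hxstar : ∀ t, IsMinOn (fun x => f t x + g x) Set.univ (xstar t)) :
    ∀ t s, ‖xstar t - xstar s‖ ≤ C₀ / m * |t - s| := by
  intro t s
  set x := xstar t
  set y := xstar s
  set d := ‖x - y‖ with hd
  -- the function φ u = f t u - f s u is (C₀ |t-s|)-Lipschitz
  have hφ : ‖(f t y - f s y) - (f t x - f s x)‖ ≤ (C₀ * |t - s|) * ‖y - x‖ := by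
    have := Convex.norm_image_sub_le_of_norm_hasFDerivWithin_le
      (f := fun u => f t u - f s u)
      (f' := fun u => (InnerProductSpace.toDual ℝ _ (gx t u) : _ →L[ℝ] ℝ)
        - (InnerProductSpace.toDual ℝ _ (gx s u) : _ →L[ℝ] ℝ))
      (s := Set.univ) (C := C₀ * |t - s|)
      (fun u _ => (((hgrad t u).hasFDerivAt.sub (hgrad s u).hasFDerivAt)).hasFDerivWithinAt)
      (fun u _ => by
        rw [← map_sub, (InnerProductSpace.toDual ℝ _).norm_map]
        exact htLip u t s)
      (convex_univ) (Set.mem_univ x) (Set.mem_univ y)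
    exact this
  -- quadratic growth at both minimizers
  have h1 : m / 2 * ‖y - x‖ ^ 2 ≤ (f t y + g y) - (f t x + g x) :=
    min_strong_growth (f t) g m (hsc t) hgconv (hxstar t) y
  have h2 : m / 2 * ‖x - y‖ ^ 2 ≤ (f s x + g x) - (f s y + g y) :=
    min_strong_growth (f s) g m (hsc s) hgconv (hxstar s) x
  have hnorm : ‖y - x‖ = d := norm_sub_rev y x
  rw [hnorm] at h1 hφ
  have hsum : m * d ^ 2 ≤ (f t y - f s y) - (f t x - f s x) := by linarith
  have habs : (f t y - f s y) - (f t x - f s x) ≤ (C₀ * |t - s|) * d :=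
    (le_abs_self _).trans (by simpa using hφ)
  have hmd : m * d ^ 2 ≤ (C₀ * |t - s|) * d := hsum.trans habs
  rcases eq_or_lt_of_le (norm_nonneg (x - y)) with h0 | h0
  · rw [hd, ← h0]
    positivity
  · have h0' : 0 < d := by rw [hd]; exact h0
    rw [div_mul_eq_mul_div, le_div_iff₀ hm]
    nlinarith
end

section
/- Let φ be m-strongly convex and L-smooth, g proper closed convex, γ ∈ (0, 1/L). The forward-backward envelope M(x) = min_y { φ(x) + ⟨∇φ(x), y − x⟩ + g(y) + ‖y − x‖²/(2γ) } satisfies argmin M = argmin (φ + g), and the minimum values coincide: min M = min (φ + g). -/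
/-- The forward-backward envelope
`M(x) = inf_y { φ(x) + ⟨∇φ(x), y - x⟩ + g(y) + ‖y - x‖²/(2γ) }`. -/
noncomputable def fbe {n : ℕ} (φ : EuclideanSpace ℝ (Fin n) → ℝ)
    (φ' : EuclideanSpace ℝ (Fin n) → EuclideanSpace ℝ (Fin n))
    (g : EuclideanSpace ℝ (Fin n) → ℝ) (γ : ℝ)
    (x : EuclideanSpace ℝ (Fin n)) : ℝ :=
  ⨅ y : EuclideanSpace ℝ (Fin n),
    (φ x + (inner ℝ (φ' x) (y - x) : ℝ) + g y + ‖y - x‖ ^ 2 / (2 * γ))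

private lemma descent_lemma {n : ℕ} (φ : EuclideanSpace ℝ (Fin n) → ℝ)
    (φ' : EuclideanSpace ℝ (Fin n) → EuclideanSpace ℝ (Fin n)) (L : ℝ) (hL : 0 ≤ L)
    (hφ' : ∀ x, HasGradientAt φ (φ' x) x)
    (hφL : ∀ x y, ‖φ' x - φ' y‖ ≤ L * ‖x - y‖)
    (x y : EuclideanSpace ℝ (Fin n)) :
    φ y ≤ φ x + (inner ℝ (φ' x) (y - x) : ℝ) + L / 2 * ‖y - x‖ ^ 2 := by
  set v := y - x with hv
  set F : ℝ → ℝ := fun t => φ (x + t • v) - t * (inner ℝ (φ' x) v : ℝ) - L * t ^ 2 / 2 * ‖v‖ ^ 2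
    with hF
  have hcomp : ∀ t : ℝ, HasDerivAt (fun t : ℝ => φ (x + t • v))
      ((inner ℝ (φ' (x + t • v)) v : ℝ)) t := by
    intro t
    have hline : HasDerivAt (fun t : ℝ => x + t • v) v t := by
      simpa using ((hasDerivAt_id t).smul_const v).const_add x
    have := ((hφ' (x + t • v)).hasFDerivAt.comp_hasDerivAt t hline)
    exact this
  have hFderiv : ∀ t : ℝ, HasDerivAt F
      ((inner ℝ (φ' (x + t • v)) v : ℝ) - (inner ℝ (φ' x) v : ℝ) - L * t * ‖v‖ ^ 2) t := by
    intro t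
    have h2 : HasDerivAt (fun t : ℝ => t * (inner ℝ (φ' x) v : ℝ)) ((inner ℝ (φ' x) v : ℝ)) t := by
      simpa using (hasDerivAt_id t).mul_const ((inner ℝ (φ' x) v : ℝ))
    have h3 : HasDerivAt (fun t : ℝ => L * t ^ 2 / 2 * ‖v‖ ^ 2) (L * t * ‖v‖ ^ 2) t := by
      have h := (((hasDerivAt_pow 2 t).const_mul L).div_const 2).mul_const (‖v‖ ^ 2)
      refine h.congr_deriv ?_
      ring
    exact ((hcomp t).sub h2).sub h3
  have hanti : AntitoneOn F (Set.Icc (0:ℝ) 1) := by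
    apply antitoneOn_of_deriv_nonpos (convex_Icc 0 1)
    · exact fun t _ => ((hFderiv t).differentiableAt).continuousAt.continuousWithinAt
    · exact fun t _ => ((hFderiv t).differentiableAt).differentiableWithinAt
    · intro t ht
      rw [interior_Icc] at ht
      rw [(hFderiv t).deriv]
      have key : (inner ℝ (φ' (x + t • v) - φ' x) v : ℝ) ≤ L * t * ‖v‖ ^ 2 := by
        calc (inner ℝ (φ' (x + t • v) - φ' x) v : ℝ) ≤ ‖φ' (x + t • v) - φ' x‖ * ‖v‖ :=
              real_inner_le_norm _ _
          _ ≤ (L * ‖(x + t • v) - x‖) * ‖v‖ :=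
              mul_le_mul_of_nonneg_right (hφL _ _) (norm_nonneg _)
          _ = L * t * ‖v‖ ^ 2 := by
              rw [add_sub_cancel_left, norm_smul, Real.norm_of_nonneg ht.1.le]
              ring
      rw [inner_sub_left] at key
      linarith
  have h01 : F 1 ≤ F 0 := hanti (Set.left_mem_Icc.2 (by norm_num))
    (Set.right_mem_Icc.2 (by norm_num)) zero_le_one
  have hx0 : x + (0:ℝ) • v = x := by simp
  have hx1 : x + (1:ℝ) • v = y := by rw [one_smul, hv]; abel
  simp only [hF, hx0, hx1] at h01
  linarith

set_option maxHeartbeats 2000000 in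
/-- For `φ ∈ S_{m,L}`, `g` proper closed convex and `γ ∈ (0, 1/L)`, the
forward-backward envelope has the same minimizers as `φ + g`, and the same
minimum value. -/
theorem stmt_12 {n : ℕ} (φ : EuclideanSpace ℝ (Fin n) → ℝ)
    (φ' : EuclideanSpace ℝ (Fin n) → EuclideanSpace ℝ (Fin n))
    (g : EuclideanSpace ℝ (Fin n) → ℝ)
    (m L γ : ℝ) (hm : 0 < m) (hmL : m ≤ L) (hγ0 : 0 < γ) (hγL : γ < 1 / L)
    (hφsc : StrongConvexOn Set.univ m φ)
    (hφ' : ∀ x, HasGradientAt φ (φ' x) x)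
    (hφL : ∀ x y, ‖φ' x - φ' y‖ ≤ L * ‖x - y‖)
    (hgconv : ConvexOn ℝ Set.univ g) (hglsc : LowerSemicontinuous g) :
    (∀ x, IsMinOn (fbe φ φ' g γ) Set.univ x ↔
        IsMinOn (fun z => φ z + g z) Set.univ x) ∧
      (⨅ x, fbe φ φ' g γ x) = ⨅ x, (φ x + g x) := by
  have hL : 0 < L := lt_of_lt_of_le hm hmL
  have hLγ : L * γ < 1 := by
    rw [lt_div_iff₀ hL] at hγL
    linarith
  set f : EuclideanSpace ℝ (Fin n) → ℝ := fun z => φ z + g z with hfdef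
  -- continuity
  have hφcont : Continuous φ := by
    rw [continuous_iff_continuousAt]
    exact fun x => (hφ' x).differentiableAt.continuousAt
  have hgcont : Continuous g := by
    rw [← continuousOn_univ]
    exact hgconv.continuousOn isOpen_univ
  have hfcont : Continuous f := hφcont.add hgcont
  -- strong convexity of f
  have hfsc : StrongConvexOn Set.univ m f := by
    rw [strongConvexOn_iff_convex] at hφsc ⊢
    have h := hφsc.add hgconv
    have : (fun z => (φ z - m / 2 * ‖z‖ ^ 2) + g z)
        = fun z => f z - m / 2 * ‖z‖ ^ 2 := by
      funext z; simp only [hfdef]; ring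
    rw [← this]
    exact h
  -- the convex part h
  set h : EuclideanSpace ℝ (Fin n) → ℝ := fun z => f z - m / 2 * ‖z‖ ^ 2 with hhdef
  have hhconv : ConvexOn ℝ Set.univ h := strongConvexOn_iff_convex.mp hfsc
  have hhcont : Continuous h := by
    apply hfcont.sub
    exact (continuous_const.mul ((continuous_norm).pow 2))
  obtain ⟨C, hC⟩ := (isCompact_closedBall (0 : EuclideanSpace ℝ (Fin n)) 1)
    |>.exists_bound_of_continuousOn hhcont.continuousOn
  have hC0 : 0 ≤ C := le_trans (norm_nonneg _) (hC 0 (by simp))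
  -- lower bound for h
  have hlb : ∀ y, -(2 * C) * (1 + ‖y‖) ≤ h y := by
    intro y
    by_cases hy : ‖y‖ ≤ 1
    · have hb := hC y (by simpa [Metric.mem_closedBall, dist_eq_norm] using hy)
      rw [Real.norm_eq_abs, abs_le] at hb
      nlinarith [norm_nonneg y]
    · push_neg at hy
      have hy0 : (0:ℝ) < ‖y‖ := lt_trans one_pos hy
      set t : ℝ := 1 / ‖y‖ with htdef
      have ht0 : 0 < t := by positivity
      have ht1 : t < 1 := by
        rw [htdef, div_lt_one hy0]; exact hy
      have hz := hhconv.2 (Set.mem_univ (0 : EuclideanSpace ℝ (Fin n))) (Set.mem_univ y)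
        (show (0:ℝ) ≤ 1 - t by linarith) ht0.le (show (1 - t) + t = 1 by ring)
      simp only [smul_eq_mul, smul_zero, zero_add] at hz
      have hnz : ‖t • y‖ ≤ 1 := by
        rw [norm_smul, Real.norm_of_nonneg ht0.le, htdef]
        rw [div_mul_cancel₀]
        exact hy0.ne'
      have hb1 := hC (t • y) (by simpa [Metric.mem_closedBall, dist_eq_norm] using hnz)
      have hb0 := hC 0 (by simp)
      rw [Real.norm_eq_abs, abs_le] at hb1 hb0
      -- t * h y ≥ h (t•y) - (1-t) * h 0 ≥ -2C, so h y ≥ -2C‖y‖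
      have key : -(2 * C) ≤ t * h y := by nlinarith
      have : -(2 * C) * ‖y‖ ≤ h y := by
        have := mul_le_mul_of_nonneg_left key hy0.le
        rw [htdef] at this
        calc -(2*C) * ‖y‖ = ‖y‖ * -(2*C) := by ring
          _ ≤ ‖y‖ * (1 / ‖y‖ * h y) := this
          _ = h y := by field_simp
      nlinarith
  have hflb : ∀ y, m / 2 * ‖y‖ ^ 2 - (2 * C) * (1 + ‖y‖) ≤ f y := by
    intro y
    have := hlb y
    simp only [hhdef] at this
    linarith
  -- coercivity
  have hcoer : Filter.Tendsto f (Filter.cocompact _) Filter.atTop := by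
    have h1 : Filter.Tendsto (fun r : ℝ => m / 2 * r) Filter.atTop Filter.atTop :=
      Filter.Tendsto.const_mul_atTop (by positivity) Filter.tendsto_id
    have h2 : Filter.Tendsto (fun r : ℝ => m / 2 * r + -(2 * C)) Filter.atTop Filter.atTop :=
      Filter.tendsto_atTop_add_const_right _ _ h1
    have h3 : Filter.Tendsto (fun r : ℝ => r * (m / 2 * r + -(2 * C)))
        Filter.atTop Filter.atTop := Filter.Tendsto.atTop_mul_atTop₀ Filter.tendsto_id h2
    have h4 : Filter.Tendsto (fun r : ℝ => r * (m / 2 * r + -(2 * C)) + -(2 * C))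
        Filter.atTop Filter.atTop := Filter.tendsto_atTop_add_const_right _ _ h3
    have h5 : Filter.Tendsto (fun r : ℝ => m / 2 * r ^ 2 - (2 * C) * (1 + r))
        Filter.atTop Filter.atTop := by
      have : (fun r : ℝ => m / 2 * r ^ 2 - (2 * C) * (1 + r))
          = fun r : ℝ => r * (m / 2 * r + -(2 * C)) + -(2 * C) := by
        funext r; ring
      rw [this]; exact h4
    have h6 := h5.comp (tendsto_norm_cocompact_atTop
      (E := EuclideanSpace ℝ (Fin n)))
    exact Filter.tendsto_atTop_mono (fun y => hflb y) h6
  obtain ⟨xs, hxs⟩ := hfcont.exists_forall_le hcoer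
  -- quadratic growth at the minimizer
  have hgrow : ∀ y, f xs + m / 4 * ‖xs - y‖ ^ 2 ≤ f y := by
    intro y
    have h2 := hfsc.2 (Set.mem_univ xs) (Set.mem_univ y)
      (show (0:ℝ) ≤ 1/2 by norm_num) (show (0:ℝ) ≤ 1/2 by norm_num)
      (show (1/2:ℝ) + 1/2 = 1 by norm_num)
    simp only [smul_eq_mul] at h2
    have hmin := hxs ((1/2 : ℝ) • xs + (1/2 : ℝ) • y)
    nlinarith
  clear_value f h
  -- constants
  set c : ℝ := 1 / (2 * γ) - L / 2 with hcdef
  have hc : 0 < c := by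
    rw [hcdef, sub_pos, div_lt_div_iff₀ (by norm_num) (by positivity)]
    nlinarith
  set c' : ℝ := min c (m / 4) / 2 with hc'def
  have hc' : 0 < c' := by
    rw [hc'def]
    have := lt_min hc (by positivity : (0:ℝ) < m / 4)
    positivity
  clear_value c
  clear_value c'
  -- pointwise bound on the terms inside the infimum
  have hterm : ∀ x y, f y + c * ‖y - x‖ ^ 2
      ≤ φ x + (inner ℝ (φ' x) (y - x) : ℝ) + g y + ‖y - x‖ ^ 2 / (2 * γ) := by
    intro x y
    have hd := descent_lemma φ φ' L hL.le hφ' hφL x y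
    have hsplit : ‖y - x‖ ^ 2 / (2 * γ) = L / 2 * ‖y - x‖ ^ 2 + c * ‖y - x‖ ^ 2 := by
      rw [hcdef]; ring
    simp only [hfdef]
    rw [hsplit]
    linarith
  have htermS : ∀ x y, f xs
      ≤ φ x + (inner ℝ (φ' x) (y - x) : ℝ) + g y + ‖y - x‖ ^ 2 / (2 * γ) := by
    intro x y
    have h1 := hterm x y
    have h2 := hxs y
    have h3 : 0 ≤ c * ‖y - x‖ ^ 2 := mul_nonneg hc.le (sq_nonneg _)
    exact le_trans h2 (le_trans (le_add_of_nonneg_right h3) h1)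
  have hbdd : ∀ x, BddBelow (Set.range fun y : EuclideanSpace ℝ (Fin n) =>
      φ x + (inner ℝ (φ' x) (y - x) : ℝ) + g y + ‖y - x‖ ^ 2 / (2 * γ)) := by
    intro x
    exact ⟨f xs, by rintro r ⟨y, rfl⟩; exact htermS x y⟩
  -- fbe x ≤ f x
  have hfbe_le : ∀ x, fbe φ φ' g γ x ≤ f x := by
    intro x
    have := ciInf_le (hbdd x) x
    simpa [fbe, hfdef] using this
  -- fbe x ≥ f xs + c' ‖x - xs‖²
  have hfbe_ge : ∀ x, f xs + c' * ‖x - xs‖ ^ 2 ≤ fbe φ φ' g γ x := by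
    intro x
    apply le_ciInf
    intro y
    have h1 := hterm x y
    have h2 := hgrow y
    have hsq : ‖x - xs‖ ^ 2 ≤ 2 * ‖y - x‖ ^ 2 + 2 * ‖xs - y‖ ^ 2 := by
      have htri : ‖x - xs‖ ≤ ‖x - y‖ + ‖y - xs‖ := by
        have := norm_add_le (x - y) (y - xs)
        simpa [sub_add_sub_cancel] using this
      have e1 : ‖x - y‖ = ‖y - x‖ := norm_sub_rev _ _
      have e2 : ‖y - xs‖ = ‖xs - y‖ := norm_sub_rev _ _
      rw [e1, e2] at htri
      have hsq1 : ‖x - xs‖ ^ 2 ≤ (‖y - x‖ + ‖xs - y‖) ^ 2 :=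
        pow_le_pow_left₀ (norm_nonneg _) htri 2
      nlinarith [sq_nonneg (‖y - x‖ - ‖xs - y‖)]
    have hminc : c' * ‖x - xs‖ ^ 2 ≤ c * ‖y - x‖ ^ 2 + m / 4 * ‖xs - y‖ ^ 2 := by
      have hmc : min c (m / 4) ≤ c := min_le_left _ _
      have hmm : min c (m / 4) ≤ m / 4 := min_le_right _ _
      have hm0 : 0 < min c (m / 4) := lt_min hc (by positivity)
      calc c' * ‖x - xs‖ ^ 2 ≤ c' * (2 * ‖y - x‖ ^ 2 + 2 * ‖xs - y‖ ^ 2) := by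
            exact mul_le_mul_of_nonneg_left hsq hc'.le
        _ = min c (m / 4) * ‖y - x‖ ^ 2 + min c (m / 4) * ‖xs - y‖ ^ 2 := by
            rw [hc'def]; ring
        _ ≤ c * ‖y - x‖ ^ 2 + m / 4 * ‖xs - y‖ ^ 2 := by
            gcongr
    calc f xs + c' * ‖x - xs‖ ^ 2
        ≤ f xs + (c * ‖y - x‖ ^ 2 + m / 4 * ‖xs - y‖ ^ 2) := by linarith
      _ = (f xs + m / 4 * ‖xs - y‖ ^ 2) + c * ‖y - x‖ ^ 2 := by ring
      _ ≤ f y + c * ‖y - x‖ ^ 2 := by linarith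
      _ ≤ _ := h1
  have hfbe_geS : ∀ x, f xs ≤ fbe φ φ' g γ x := by
    intro x
    exact le_trans (le_add_of_nonneg_right (mul_nonneg hc'.le (sq_nonneg _))) (hfbe_ge x)
  constructor
  · intro x
    rw [isMinOn_univ_iff, isMinOn_univ_iff]
    constructor
    · intro hmin
      have hx1 : fbe φ φ' g γ x ≤ f xs := le_trans (hmin xs) (hfbe_le xs)
      have hx2 := hfbe_ge x
      have hxx : ‖x - xs‖ ^ 2 ≤ 0 := by nlinarith
      have hxx0 : x = xs := by
        have : ‖x - xs‖ = 0 := by nlinarith [norm_nonneg (x - xs), sq_nonneg ‖x - xs‖]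
        rwa [norm_eq_zero, sub_eq_zero] at this
      intro z
      rw [hxx0]
      exact hxs z
    · intro hmin z
      calc fbe φ φ' g γ x ≤ f x := hfbe_le x
        _ ≤ f xs := hmin xs
        _ ≤ fbe φ φ' g γ z := hfbe_geS z
  · have hA : (⨅ x, fbe φ φ' g γ x) = f xs := by
      apply le_antisymm
      · have hb : BddBelow (Set.range fun x => fbe φ φ' g γ x) :=
          ⟨f xs, by rintro r ⟨x, rfl⟩; exact hfbe_geS x⟩
        exact le_trans (ciInf_le hb xs) (hfbe_le xs)
      · exact le_ciInf hfbe_geS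
    rw [hA]
    have hb : BddBelow (Set.range f) := ⟨f xs, by rintro r ⟨x, rfl⟩; exact hxs x⟩
    exact (le_antisymm (ciInf_le hb xs) (le_ciInf hxs)).symm
end

section
/- If e_{k+1} ≤ ζ^C(ζ^P e_k + (ζ^P + 1)(a₁ e_k + a₀)) + ζ^C ζ^P b with ζ ∈ (0,1), a₁, a₀, b ≥ 0, and the contraction condition ζ^C[ζ^P + (ζ^P + 1)a₁] < 1 holds, then e_k remains bounded and limsup e_k ≤ ζ^C(ζ^P b + (ζ^P + 1)a₀)/(1 − ζ^C[ζ^P + (ζ^P+1)a₁]). -/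
/-- Prediction-correction error recursion: if
`e_{k+1} ≤ ζ^C (ζ^P e_k + (ζ^P + 1)(a₁ e_k + a₀)) + ζ^C ζ^P b` with
`ζ ∈ (0,1)`, `a₁, a₀, b ≥ 0`, and `ζ^C (ζ^P + (ζ^P + 1) a₁) < 1`, then the
sequence remains bounded and
`limsup e ≤ ζ^C (ζ^P b + (ζ^P + 1) a₀) / (1 - ζ^C (ζ^P + (ζ^P + 1) a₁))`. -/
theorem stmt_15 (e : ℕ → ℝ) (ζ a₁ a₀ b : ℝ) (P C : ℕ)
    (hζ0 : 0 < ζ) (hζ1 : ζ < 1) (ha₁ : 0 ≤ a₁) (ha₀ : 0 ≤ a₀) (hb : 0 ≤ b)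
    (he : ∀ k, 0 ≤ e k)
    (hrec : ∀ k, e (k + 1) ≤
      ζ ^ C * (ζ ^ P * e k + (ζ ^ P + 1) * (a₁ * e k + a₀)) + ζ ^ C * ζ ^ P * b)
    (hcontr : ζ ^ C * (ζ ^ P + (ζ ^ P + 1) * a₁) < 1) :
    (∃ M, ∀ k, e k ≤ M) ∧
      Filter.limsup e Filter.atTop ≤
        ζ ^ C * (ζ ^ P * b + (ζ ^ P + 1) * a₀) /
          (1 - ζ ^ C * (ζ ^ P + (ζ ^ P + 1) * a₁)) := by
  set ρ : ℝ := ζ ^ C * (ζ ^ P + (ζ ^ P + 1) * a₁) with hρdef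
  set δ : ℝ := ζ ^ C * (ζ ^ P * b + (ζ ^ P + 1) * a₀) with hδdef
  have hρ0 : 0 ≤ ρ := by positivity
  have hδ0 : 0 ≤ δ := by positivity
  set L : ℝ := δ / (1 - ρ) with hLdef
  have h1ρ : 0 < 1 - ρ := by linarith
  have hL0 : 0 ≤ L := div_nonneg hδ0 (le_of_lt h1ρ)
  have hLeq : ρ * L + δ = L := by
    rw [hLdef, eq_div_iff h1ρ.ne', add_mul, mul_assoc, div_mul_cancel₀ _ h1ρ.ne']
    ring
  have hrec' : ∀ k, e (k + 1) ≤ ρ * e k + δ := fun k =>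
    (hrec k).trans_eq (by rw [hρdef, hδdef]; ring)
  set M₀ : ℝ := max (e 0 - L) 0 with hM₀def
  have key : ∀ k, e k ≤ L + ρ ^ k * M₀ := by
    intro k
    induction k with
    | zero =>
      simp [hM₀def]
      have : e 0 - L ≤ max (e 0 - L) 0 := le_max_left _ _
      linarith
    | succ n ih =>
      have h1 : e (n + 1) ≤ ρ * e n + δ := hrec' n
      have h2 : ρ * e n ≤ ρ * (L + ρ ^ n * M₀) := mul_le_mul_of_nonneg_left ih hρ0
      calc e (n + 1) ≤ ρ * (L + ρ ^ n * M₀) + δ := by linarith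
        _ = (ρ * L + δ) + ρ ^ (n + 1) * M₀ := by ring
        _ = L + ρ ^ (n + 1) * M₀ := by rw [hLeq]
  have hM₀0 : 0 ≤ M₀ := le_max_right _ _
  have hbound : ∀ k, e k ≤ L + M₀ := by
    intro k
    have hpow : ρ ^ k ≤ 1 := pow_le_one₀ hρ0 hcontr.le
    have := key k
    nlinarith
  constructor
  · exact ⟨L + M₀, hbound⟩
  · have htend : Filter.Tendsto (fun k => L + ρ ^ k * M₀) Filter.atTop (nhds L) := by
      have h1 : Filter.Tendsto (fun k : ℕ => ρ ^ k) Filter.atTop (nhds 0) :=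
        tendsto_pow_atTop_nhds_zero_of_lt_one hρ0 (by linarith)
      have := ((h1.mul_const M₀).const_add L)
      simpa using this
    have hls : Filter.limsup (fun k => L + ρ ^ k * M₀) Filter.atTop = L :=
      htend.limsup_eq
    calc Filter.limsup e Filter.atTop
        ≤ Filter.limsup (fun k => L + ρ ^ k * M₀) Filter.atTop := by
          apply Filter.limsup_le_limsup
          · exact Filter.Eventually.of_forall key
          · exact Filter.isCoboundedUnder_le_of_le Filter.atTop he
          · exact Filter.isBoundedUnder_of ⟨L + M₀, fun k => by
              have hpow : ρ ^ k ≤ 1 := pow_le_one₀ hρ0 hcontr.le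
              nlinarith⟩
      _ = L := hls
end
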